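/- arXiv:2002.08995 — 4 statements merged into one kernel-verified Lean document; each statement's English description precedes it below -/
import Mathlib

section
/- For the cubic form f = x₀x₃² + x₁x₃x₄ + x₂x₄² in K[x₀,x₁,x₂,x₃,x₄] over a field K of characteristic zero, the Hessian determinant of f (the determinant of the 5×5 matrix of second partial derivatives) is identically zero. -/
open MvPolynomial

lemma pderiv_two' {K : Type*} [CommRing K] (i : Fin 5) :
    pderiv i (2 : MvPolynomial (Fin 5) K) = 0 := by
  have h : (2 : MvPolynomial (Fin 5) K) = ((2 : ℕ) : MvPolynomial (Fin 5) K) := by norm_num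
  rw [h, Derivation.map_natCast]

set_option maxHeartbeats 2000000 in
/-- For `f = x₀x₃² + x₁x₃x₄ + x₂x₄²` over a field `K` of characteristic
zero, the Hessian determinant (determinant of the 5×5 matrix of second partial
derivatives) is identically zero. -/
theorem hessian_vanishes (K : Type*) [Field K] [CharZero K]
    (f : MvPolynomial (Fin 5) K)
    (hf : f = X 0 * X 3 ^ 2 + X 1 * X 3 * X 4 + X 2 * X 4 ^ 2) :
    (Matrix.of fun i j : Fin 5 => pderiv i (pderiv j f)).det = 0 := by
  have hM : (Matrix.of fun i j : Fin 5 => pderiv i (pderiv j f)) =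
      !![0,0,0,2*X 3,0; 0,0,0,X 4,X 3; 0,0,0,0,2*X 4;
         2*X 3,X 4,0,2*X 0,X 1; 0,X 3,2*X 4,X 1,2*X 2] := by
    ext i j
    fin_cases i <;> fin_cases j <;>
      simp [hf, pderiv_X, Pi.single_apply, pderiv_two'] <;> ring_nf
  rw [hM]
  simp [Matrix.det_succ_row_zero, Fin.sum_univ_succ, Fin.succAbove]
end

section
/- Let f = x₀x₃² + x₁x₃x₄ + x₂x₄² over a field K of characteristic zero and A = Q/Ann_f the associated Artinian Gorenstein algebra, where Q = K[X₀,…,X₄] acts on K[x₀,…,x₄] by differentiation. Then the Hilbert function of A is (1,5,5,1), i.e., dim_K A₀ = 1, dim_K A₁ = 5, dim_K A₂ = 5, dim_K A₃ = 1, and A_k = 0 for k ≥ 4. -/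
open MvPolynomial Module

/-- The action of a polynomial differential operator `α ∈ Q = K[X₀,…,X_N]` on
`f ∈ R = K[x₀,…,x_N]`, where the variable `Xᵢ` acts as `∂/∂xᵢ`. -/
noncomputable def applyOp {K : Type*} [CommSemiring K] {n : ℕ}
    (α f : MvPolynomial (Fin n) K) : MvPolynomial (Fin n) K :=
  ∑ m ∈ α.support,
    α.coeff m •
      ((List.ofFn fun i : Fin n =>
          ((pderiv i).toLinearMap ^ m i : Module.End K (MvPolynomial (Fin n) K))).prod f)

namespace Perazzo
variable {K : Type*} [Field K] [CharZero K]
set_option linter.unusedSectionVars false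

noncomputable def PD (K : Type*) [Field K] (i : Fin 5) :
    Module.End K (MvPolynomial (Fin 5) K) := (pderiv i).toLinearMap

noncomputable def vOp (m : Fin 5 →₀ ℕ) : Module.End K (MvPolynomial (Fin 5) K) :=
  (List.ofFn fun i : Fin 5 => PD K i ^ m i).prod

lemma applyOp_eq (α f : MvPolynomial (Fin 5) K) :
    applyOp α f = ∑ m ∈ α.support, α.coeff m • vOp m f := rfl

lemma vOp_apply (m : Fin 5 →₀ ℕ) (f : MvPolynomial (Fin 5) K) :
    vOp m f = (PD K 0 ^ m 0) ((PD K 1 ^ m 1) ((PD K 2 ^ m 2)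
      ((PD K 3 ^ m 3) ((PD K 4 ^ m 4) f)))) := by
  simp only [vOp, List.ofFn_succ, List.ofFn_zero, List.prod_cons, List.prod_nil,
    Module.End.mul_apply, Module.End.one_apply, mul_one]
  rfl

lemma pderiv_comm' (i j : Fin 5) (p : MvPolynomial (Fin 5) K) :
    pderiv i (pderiv j p) = pderiv j (pderiv i p) := by
  induction p using MvPolynomial.induction_on' with
  | monomial s a =>
    rcases eq_or_ne i j with rfl | hij
    · rfl
    · simp only [pderiv_monomial, Finsupp.tsub_apply, Finsupp.single_apply,
        if_neg hij, if_neg (Ne.symm hij), Nat.sub_zero]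
      rw [tsub_right_comm]
      ring_nf
  | add p q hp hq => simp [hp, hq]

lemma pderiv_pow_comm (i j : Fin 5) (k : ℕ) (p : MvPolynomial (Fin 5) K) :
    pderiv i ((PD K j ^ k) p) = (PD K j ^ k) (pderiv i p) := by
  induction k generalizing p with
  | zero => simp
  | succ n ih =>
    simp only [pow_succ, Module.End.mul_apply, ih]
    congr 1
    exact pderiv_comm' i j p

@[simp] lemma PD_apply (i : Fin 5) (p : MvPolynomial (Fin 5) K) :
    PD K i p = pderiv i p := rfl

lemma vOp_step (m : Fin 5 →₀ ℕ) (i : Fin 5) (f : MvPolynomial (Fin 5) K) :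
    vOp (m + Finsupp.single i 1) f = vOp m (pderiv i f) := by
  fin_cases i <;>
  · simp only [vOp_apply, Finsupp.add_apply, Finsupp.single_apply]
    simp (config := { decide := true }) only [Finsupp.single_apply]
    norm_num [pow_succ, Module.End.mul_apply, pderiv_pow_comm]
    try rfl

lemma vOp_zero (f : MvPolynomial (Fin 5) K) : vOp (0 : Fin 5 →₀ ℕ) f = f := by
  simp [vOp_apply]

lemma vOp_single_one (i : Fin 5) (f : MvPolynomial (Fin 5) K) :
    vOp (Finsupp.single i 1) f = pderiv i f := by
  rw [show Finsupp.single i 1 = 0 + Finsupp.single i 1 from (zero_add _).symm,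
    vOp_step, vOp_zero]

noncomputable def fpoly : MvPolynomial (Fin 5) K :=
  X 0 * X 3 ^ 2 + X 1 * X 3 * X 4 + X 2 * X 4 ^ 2

noncomputable def b1 : Fin 5 → MvPolynomial (Fin 5) K :=
  ![X 3 ^ 2, X 3 * X 4, X 4 ^ 2, 2 * X 0 * X 3 + X 1 * X 4, X 1 * X 3 + 2 * X 2 * X 4]

lemma pderiv_fpoly (i : Fin 5) : pderiv i (fpoly (K := K)) = b1 i := by
  fin_cases i <;> simp [fpoly, b1, pderiv_mul] <;> ring

noncomputable def db : Fin 5 → Fin 5 → MvPolynomial (Fin 5) K :=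
  ![![0, 0, 0, (2:K) • X 3, 0],
    ![0, 0, 0, X 4, X 3],
    ![0, 0, 0, 0, (2:K) • X 4],
    ![(2:K) • X 3, X 4, 0, (2:K) • X 0, X 1],
    ![0, X 3, (2:K) • X 4, X 1, (2:K) • X 2]]

lemma pderiv_two (i : Fin 5) : pderiv i (2 : MvPolynomial (Fin 5) K) = 0 := by
  rw [← map_ofNat (C : K →+* MvPolynomial (Fin 5) K) 2, pderiv_C]

set_option maxHeartbeats 1000000 in
lemma pderiv_b1 (j i : Fin 5) : pderiv i (b1 (K := K) j) = db j i := by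
  fin_cases j <;> fin_cases i <;>
    simp [b1, db, pderiv_mul, smul_eq_C_mul, map_ofNat, pderiv_two] <;> ring

noncomputable def Wsp (K : Type*) [Field K] : ℕ → Submodule K (MvPolynomial (Fin 5) K)
  | 0 => Submodule.span K {fpoly}
  | 1 => Submodule.span K (Set.range b1)
  | 2 => Submodule.span K (Set.range X)
  | 3 => Submodule.span K {1}
  | _ + 4 => ⊥

lemma Wsp_bot (k : ℕ) (hk : 4 ≤ k) : Wsp K k = ⊥ := by
  match k, hk with
  | (n + 4), _ => rfl

lemma degree_eq (d : Fin 5 →₀ ℕ) : d.degree = ∑ j : Fin 5, d j := by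
  rw [Finsupp.degree]
  exact Finset.sum_subset (Finset.subset_univ _)
    (fun x _ hx => Finsupp.notMem_support_iff.mp hx)

lemma stepA (i : Fin 5) (k : ℕ) (p : MvPolynomial (Fin 5) K)
    (hp : p ∈ Wsp K k) : pderiv i p ∈ Wsp K (k + 1) := by
  match k with
  | 0 =>
    obtain ⟨a, rfl⟩ := Submodule.mem_span_singleton.mp hp
    rw [Derivation.map_smul, pderiv_fpoly]
    exact Submodule.smul_mem _ _ (Submodule.subset_span ⟨i, rfl⟩)
  | 1 =>
    have h : Submodule.span K (Set.range (b1 (K := K))) ≤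
        (Wsp K 2).comap (pderiv i).toLinearMap := by
      refine Submodule.span_le.mpr ?_
      rintro _ ⟨j, rfl⟩
      show pderiv i (b1 j) ∈ Wsp K 2
      rw [pderiv_b1]
      have hX : ∀ a : Fin 5, (X a : MvPolynomial (Fin 5) K) ∈ Wsp K 2 :=
        fun a => Submodule.subset_span ⟨a, rfl⟩
      fin_cases j <;> fin_cases i <;>
        simp only [db, Matrix.cons_val_zero, Matrix.cons_val_one, Matrix.head_cons,
          Matrix.cons_val_two, Matrix.tail_cons, Matrix.cons_val_three, Matrix.cons_val_four,
          Matrix.cons_val_fin_one] <;>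
        first
          | exact Submodule.zero_mem _
          | exact hX _
          | exact Submodule.smul_mem _ _ (hX _)
    exact h hp
  | 2 =>
    have h : Submodule.span K (Set.range (X : Fin 5 → MvPolynomial (Fin 5) K)) ≤
        (Wsp K 3).comap (pderiv i).toLinearMap := by
      refine Submodule.span_le.mpr ?_
      rintro _ ⟨j, rfl⟩
      show pderiv i (X j) ∈ Wsp K 3
      rcases eq_or_ne j i with rfl | hij
      · rw [pderiv_X_self]
        exact Submodule.subset_span rfl
      · rw [pderiv_X_of_ne hij]
        exact Submodule.zero_mem _
    exact h hp
  | 3 =>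
    obtain ⟨a, rfl⟩ := Submodule.mem_span_singleton.mp hp
    show pderiv i (a • 1) ∈ (⊥ : Submodule K (MvPolynomial (Fin 5) K))
    rw [Derivation.map_smul, pderiv_one, smul_zero]
    exact Submodule.zero_mem _
  | (n + 4) =>
    rw [Wsp_bot _ (by omega)] at hp
    rw [Submodule.mem_bot] at hp
    subst hp
    rw [map_zero, Wsp_bot _ (by omega)]
    exact Submodule.zero_mem _

lemma vOp_mem : ∀ (n : ℕ) (m : Fin 5 →₀ ℕ), m.degree = n →
    ∀ (k : ℕ) (p : MvPolynomial (Fin 5) K), p ∈ Wsp K k → vOp m p ∈ Wsp K (k + n) := by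
  intro n
  induction n with
  | zero =>
    intro m hm k p hp
    have hm0 : m = 0 := (Finsupp.degree_eq_zero_iff m).mp hm
    subst hm0
    simpa [vOp_zero] using hp
  | succ n ih =>
    intro m hm k p hp
    have hm0 : m ≠ 0 := by
      intro h
      rw [h, map_zero] at hm
      omega
    obtain ⟨i, hi⟩ : ∃ i, m i ≠ 0 := by
      by_contra h
      push_neg at h
      exact hm0 (Finsupp.ext fun a => h a)
    have hdec : m = (m - Finsupp.single i 1) + Finsupp.single i 1 := by
      ext j
      rcases eq_or_ne i j with rfl | hij
      · simp only [Finsupp.add_apply, Finsupp.tsub_apply, Finsupp.single_eq_same]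
        omega
      · simp only [Finsupp.add_apply, Finsupp.tsub_apply, Finsupp.single_apply, if_neg hij]
        omega
    have hdeg' : (m - Finsupp.single i 1).degree = n := by
      have h1 : m.degree = (m - Finsupp.single i 1).degree + (Finsupp.single i 1).degree := by
        rw [degree_eq, degree_eq, degree_eq, ← Finset.sum_add_distrib]
        refine Finset.sum_congr rfl fun j _ => ?_
        rcases eq_or_ne i j with rfl | hij
        · simp only [Finsupp.tsub_apply, Finsupp.single_eq_same]
          omega
        · simp only [Finsupp.tsub_apply, Finsupp.single_apply, if_neg hij]
          omega
      have h2 : (Finsupp.single i (1:ℕ)).degree = 1 := by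
        rw [degree_eq]
        simp [Finsupp.single_apply]
      omega
    rw [hdec, vOp_step]
    have := ih (m - Finsupp.single i 1) hdeg' (k + 1) (pderiv i p) (stepA i k p hp)
    have harith : k + 1 + n = k + (n + 1) := by omega
    rwa [harith] at this

lemma applyOp_mem (k : ℕ) (α : MvPolynomial (Fin 5) K) (hα : α.IsHomogeneous k) :
    applyOp α (fpoly (K := K)) ∈ Wsp K k := by
  rw [applyOp_eq]
  refine Submodule.sum_mem _ fun m hm => Submodule.smul_mem _ _ ?_
  have hdm : m.degree = k := by
    rw [Finsupp.degree_eq_weight_one]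
    exact hα (MvPolynomial.mem_support_iff.mp hm)
  have h0 : (fpoly (K := K)) ∈ Wsp K 0 := Submodule.subset_span rfl
  simpa [hdm] using vOp_mem m.degree m rfl 0 fpoly h0

lemma applyOp_monomial (m : Fin 5 →₀ ℕ) (c : K) (hc : c ≠ 0) (f : MvPolynomial (Fin 5) K) :
    applyOp (monomial m c) f = c • vOp m f := by
  classical
  rw [applyOp_eq, support_monomial, if_neg hc, Finset.sum_singleton, coeff_monomial, if_pos rfl]

lemma vOp_pair (i j : Fin 5) (f : MvPolynomial (Fin 5) K) :
    vOp (Finsupp.single i 1 + Finsupp.single j 1) f = pderiv i (pderiv j f) := by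
  rw [vOp_step, vOp_single_one]

lemma vOp_triple (i j k : Fin 5) (f : MvPolynomial (Fin 5) K) :
    vOp (Finsupp.single i 1 + Finsupp.single j 1 + Finsupp.single k 1) f
      = pderiv i (pderiv j (pderiv k f)) := by
  rw [vOp_step, vOp_pair]

lemma gen0 : applyOp (1 : MvPolynomial (Fin 5) K) fpoly = fpoly := by
  rw [show (1 : MvPolynomial (Fin 5) K) = monomial 0 1 by rw [monomial_zero', C_1],
    applyOp_monomial _ _ one_ne_zero, vOp_zero, one_smul]

lemma gen1 (i : Fin 5) : applyOp (X i : MvPolynomial (Fin 5) K) fpoly = b1 i := by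
  rw [show (X i : MvPolynomial (Fin 5) K) = monomial (Finsupp.single i 1) 1 from rfl,
    applyOp_monomial _ _ one_ne_zero, vOp_single_one, one_smul, pderiv_fpoly]

lemma sum_single (i : Fin 5) : ∑ k : Fin 5, Finsupp.single i (1:ℕ) k = 1 := by
  simp [Finsupp.single_apply]

lemma deg_pair (i j : Fin 5) : (Finsupp.single i 1 + Finsupp.single j 1).degree = 2 := by
  rw [degree_eq]
  simp only [Finsupp.add_apply, Finset.sum_add_distrib, sum_single]

lemma deg_triple (i j k : Fin 5) :
    (Finsupp.single i 1 + Finsupp.single j 1 + Finsupp.single k 1).degree = 3 := by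
  rw [degree_eq]
  simp only [Finsupp.add_apply, Finset.sum_add_distrib, sum_single]

lemma fpoly_ne : (fpoly : MvPolynomial (Fin 5) K) ≠ 0 := by
  intro h
  have := congrArg (eval (![1, 0, 0, 1, 0] : Fin 5 → K)) h
  simp [fpoly] at this

lemma b1_indep : LinearIndependent K (b1 (K := K)) := by
  rw [Fintype.linearIndependent_iff]
  intro g hg
  rw [Fin.sum_univ_five] at hg
  simp only [b1, Matrix.cons_val_zero, Matrix.cons_val_one, Matrix.head_cons,
    Matrix.cons_val_two, Matrix.tail_cons, Matrix.cons_val_three, Matrix.cons_val_four] at hg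
  have e1 := congrArg (eval (![0, 0, 0, 1, 0] : Fin 5 → K)) hg
  have e2 := congrArg (eval (![0, 0, 0, 0, 1] : Fin 5 → K)) hg
  have e3 := congrArg (eval (![0, 0, 0, 1, 1] : Fin 5 → K)) hg
  have e4 := congrArg (eval (![1, 0, 0, 1, 0] : Fin 5 → K)) hg
  have e5 := congrArg (eval (![0, 0, 1, 0, 1] : Fin 5 → K)) hg
  simp [smul_eval] at e1 e2 e3 e4 e5
  intro i
  fin_cases i
  · exact e1
  · show g 1 = 0
    linear_combination e3 - e1 - e2
  · exact e2
  · show g 3 = 0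
    linear_combination (e4 - e1) / 2
  · show g 4 = 0
    linear_combination (e5 - e2) / 2

lemma span_le_W (k : ℕ) :
    Submodule.span K ((fun α => applyOp α (fpoly (K := K))) ''
      {α : MvPolynomial (Fin 5) K | α.IsHomogeneous k}) ≤ Wsp K k := by
  refine Submodule.span_le.mpr ?_
  rintro _ ⟨α, hα, rfl⟩
  exact applyOp_mem k α hα

lemma span0 : Submodule.span K ((fun α => applyOp α (fpoly (K := K))) ''
    {α : MvPolynomial (Fin 5) K | α.IsHomogeneous 0}) = Wsp K 0 := by
  refine le_antisymm (span_le_W 0) ?_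
  show Submodule.span K {fpoly} ≤ _
  refine Submodule.span_le.mpr ?_
  rintro x rfl
  exact Submodule.subset_span ⟨1, isHomogeneous_one _ _, gen0⟩

lemma span1 : Submodule.span K ((fun α => applyOp α (fpoly (K := K))) ''
    {α : MvPolynomial (Fin 5) K | α.IsHomogeneous 1}) = Wsp K 1 := by
  refine le_antisymm (span_le_W 1) ?_
  show Submodule.span K (Set.range b1) ≤ _
  refine Submodule.span_le.mpr ?_
  rintro _ ⟨i, rfl⟩
  exact Submodule.subset_span ⟨X i, isHomogeneous_X _ _, gen1 i⟩

lemma span2 : Submodule.span K ((fun α => applyOp α (fpoly (K := K))) ''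
    {α : MvPolynomial (Fin 5) K | α.IsHomogeneous 2}) = Wsp K 2 := by
  refine le_antisymm (span_le_W 2) ?_
  show Submodule.span K (Set.range X) ≤ _
  refine Submodule.span_le.mpr ?_
  rintro _ ⟨i, rfl⟩
  fin_cases i
  · refine Submodule.subset_span
      ⟨monomial (Finsupp.single 3 1 + Finsupp.single 3 1) ((2:K)⁻¹),
        isHomogeneous_monomial _ (deg_pair 3 3), ?_⟩
    show applyOp _ fpoly = _
    rw [applyOp_monomial _ _ (by norm_num), vOp_pair, pderiv_fpoly, pderiv_b1]
    show (2:K)⁻¹ • db 3 3 = X 0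
    simp only [db, Matrix.cons_val_three, Matrix.cons_val_zero, Matrix.tail_cons,
      Matrix.head_cons, Matrix.cons_val_one, Matrix.cons_val_two, Matrix.cons_val_four]
    rw [smul_smul]
    norm_num
  · refine Submodule.subset_span
      ⟨monomial (Finsupp.single 3 1 + Finsupp.single 4 1) 1,
        isHomogeneous_monomial _ (deg_pair 3 4), ?_⟩
    show applyOp _ fpoly = _
    rw [applyOp_monomial _ _ one_ne_zero, vOp_pair, pderiv_fpoly, pderiv_b1, one_smul]
    show db 4 3 = X 1
    simp [db]
  · refine Submodule.subset_span
      ⟨monomial (Finsupp.single 4 1 + Finsupp.single 4 1) ((2:K)⁻¹),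
        isHomogeneous_monomial _ (deg_pair 4 4), ?_⟩
    show applyOp _ fpoly = _
    rw [applyOp_monomial _ _ (by norm_num), vOp_pair, pderiv_fpoly, pderiv_b1]
    show (2:K)⁻¹ • db 4 4 = X 2
    simp only [db, Matrix.cons_val_four, Matrix.cons_val_zero, Matrix.tail_cons,
      Matrix.head_cons, Matrix.cons_val_one, Matrix.cons_val_two, Matrix.cons_val_three]
    rw [smul_smul]
    norm_num
  · refine Submodule.subset_span
      ⟨monomial (Finsupp.single 0 1 + Finsupp.single 3 1) ((2:K)⁻¹),
        isHomogeneous_monomial _ (deg_pair 0 3), ?_⟩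
    show applyOp _ fpoly = _
    rw [applyOp_monomial _ _ (by norm_num), vOp_pair, pderiv_fpoly, pderiv_b1]
    show (2:K)⁻¹ • db 3 0 = X 3
    simp only [db, Matrix.cons_val_three, Matrix.cons_val_zero, Matrix.tail_cons,
      Matrix.head_cons, Matrix.cons_val_one, Matrix.cons_val_two, Matrix.cons_val_four]
    rw [smul_smul]
    norm_num
  · refine Submodule.subset_span
      ⟨monomial (Finsupp.single 1 1 + Finsupp.single 3 1) 1,
        isHomogeneous_monomial _ (deg_pair 1 3), ?_⟩
    show applyOp _ fpoly = _
    rw [applyOp_monomial _ _ one_ne_zero, vOp_pair, pderiv_fpoly, pderiv_b1, one_smul]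
    show db 3 1 = X 4
    simp [db]

lemma span3 : Submodule.span K ((fun α => applyOp α (fpoly (K := K))) ''
    {α : MvPolynomial (Fin 5) K | α.IsHomogeneous 3}) = Wsp K 3 := by
  refine le_antisymm (span_le_W 3) ?_
  show Submodule.span K {1} ≤ _
  refine Submodule.span_le.mpr ?_
  rintro x rfl
  refine Submodule.subset_span
    ⟨monomial (Finsupp.single 1 1 + Finsupp.single 3 1 + Finsupp.single 4 1) 1,
      isHomogeneous_monomial _ (deg_triple 1 3 4), ?_⟩
  show applyOp _ fpoly = _
  rw [applyOp_monomial _ _ one_ne_zero, vOp_triple, pderiv_fpoly, pderiv_b1, one_smul]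
  show pderiv 1 (db 4 3) = 1
  simp [db]

end Perazzo

/-- For `f = x₀x₃² + x₁x₃x₄ + x₂x₄²`, the Artinian Gorenstein algebra
`A = Q/Ann_f` has Hilbert function `(1,5,5,1)`.  Since the degree-`k` graded piece
`A_k = Q_k/(Ann_f)_k` is isomorphic (as a `K`-vector space) to the image of the
contraction map `Q_k → R_{3-k}`, `α ↦ α(f)`, we express `dim_K A_k` as the dimension
of the span of `{α(f) : α ∈ Q_k homogeneous of degree k}`, and `A_k = 0` for `k ≥ 4`
as the vanishing of that span. -/
theorem hilbert_vector_of_perazzo_cubic (K : Type*) [Field K] [CharZero K]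
    (f : MvPolynomial (Fin 5) K)
    (hf : f = X 0 * X 3 ^ 2 + X 1 * X 3 * X 4 + X 2 * X 4 ^ 2) :
    (finrank K (Submodule.span K
        ((fun α => applyOp α f) '' {α : MvPolynomial (Fin 5) K | α.IsHomogeneous 0})) = 1) ∧
    (finrank K (Submodule.span K
        ((fun α => applyOp α f) '' {α : MvPolynomial (Fin 5) K | α.IsHomogeneous 1})) = 5) ∧
    (finrank K (Submodule.span K
        ((fun α => applyOp α f) '' {α : MvPolynomial (Fin 5) K | α.IsHomogeneous 2})) = 5) ∧
    (finrank K (Submodule.span K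
        ((fun α => applyOp α f) '' {α : MvPolynomial (Fin 5) K | α.IsHomogeneous 3})) = 1) ∧
    (∀ k : ℕ, 4 ≤ k → ∀ α : MvPolynomial (Fin 5) K, α.IsHomogeneous k →
        applyOp α f = 0) := by
  obtain rfl : Perazzo.fpoly (K := K) = f := hf.symm
  refine ⟨?_, ?_, ?_, ?_, ?_⟩
  · rw [Perazzo.span0]
    exact finrank_span_singleton Perazzo.fpoly_ne
  · rw [Perazzo.span1]
    exact (finrank_span_eq_card Perazzo.b1_indep).trans (by simp)
  · rw [Perazzo.span2]
    exact (finrank_span_eq_card (MvPolynomial.linearIndependent_X (Fin 5) K)).trans (by simp)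
  · rw [Perazzo.span3]
    exact finrank_span_singleton one_ne_zero
  · intro k hk α hα
    have h := Perazzo.applyOp_mem k α hα
    rwa [Perazzo.Wsp_bot k hk, Submodule.mem_bot] at h
end

section
/- Let f = x₀x₃² + x₁x₃x₄ + x₂x₄² over a field K of characteristic zero and A = Q/Ann_f. Then A fails the Strong Lefschetz Property: for every linear form L ∈ A₁, the multiplication map L: A₁ → A₂ is not an isomorphism. -/
open MvPolynomial

section Lemmas
variable {K : Type*} [CommSemiring K]

private lemma pderiv_comm' (i j : Fin 5) (f : MvPolynomial (Fin 5) K) :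
    pderiv i (pderiv j f) = pderiv j (pderiv i f) := by
  induction f using MvPolynomial.induction_on with
  | C c => simp
  | add p q hp hq => simp [hp, hq]
  | mul_X p k hp =>
      simp only [pderiv_mul, map_add, pderiv_X, hp, Pi.single_apply]
      split_ifs <;> simp <;> ring

private lemma applyOp_sup (α f : MvPolynomial (Fin 5) K) (s : Finset (Fin 5 →₀ ℕ))
    (hs : α.support ⊆ s) :
    applyOp α f = ∑ m ∈ s, α.coeff m •
      ((List.ofFn fun i : Fin 5 =>
          ((pderiv i).toLinearMap ^ m i : Module.End K (MvPolynomial (Fin 5) K))).prod f) := by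
  unfold applyOp
  exact Finset.sum_subset hs (fun m _ hm => by
    rw [MvPolynomial.notMem_support_iff.mp hm, zero_smul])

private lemma applyOp_add (α β f : MvPolynomial (Fin 5) K) :
    applyOp (α + β) f = applyOp α f + applyOp β f := by
  rw [applyOp_sup (α+β) f (α.support ∪ β.support) MvPolynomial.support_add,
      applyOp_sup α f (α.support ∪ β.support) Finset.subset_union_left,
      applyOp_sup β f (α.support ∪ β.support) Finset.subset_union_right,
      ← Finset.sum_add_distrib]
  simp [coeff_add, add_smul]

private lemma applyOp_Cmul (c : K) (α f : MvPolynomial (Fin 5) K) :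
    applyOp (C c * α) f = c • applyOp α f := by
  rw [C_mul']
  rw [applyOp_sup (c • α) f α.support (Finsupp.support_smul), applyOp]
  rw [Finset.smul_sum]
  refine Finset.sum_congr rfl fun m _ => ?_
  rw [MvPolynomial.coeff_smul, smul_eq_mul, mul_smul]

private lemma applyOp_monomial (m : Fin 5 →₀ ℕ) (c : K) (f : MvPolynomial (Fin 5) K) :
    applyOp (monomial m c) f = c •
      ((List.ofFn fun i : Fin 5 =>
          ((pderiv i).toLinearMap ^ m i : Module.End K (MvPolynomial (Fin 5) K))).prod f) := by
  classical
  rcases eq_or_ne c 0 with rfl | hc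
  · simp [applyOp]
  · rw [applyOp, support_monomial, if_neg hc, Finset.sum_singleton, coeff_monomial, if_pos rfl]

private lemma applyOp_X (i : Fin 5) (f : MvPolynomial (Fin 5) K) :
    applyOp (X i) f = pderiv i f := by
  rw [show (X i : MvPolynomial (Fin 5) K) = monomial (Finsupp.single i 1) 1 from rfl,
    applyOp_monomial]
  fin_cases i <;>
    simp [List.ofFn_succ, Finsupp.single_apply, Module.End.mul_apply, show (Fin.succ 2 : Fin 5) = 3 from rfl, show ((Fin.succ 2).succ : Fin 5) = 4 from rfl, show (Fin.succ 1 : Fin 5) = 2 from rfl, show (Fin.succ 0 : Fin 5) = 1 from rfl]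

private lemma applyOp_XX (i j : Fin 5) (f : MvPolynomial (Fin 5) K) :
    applyOp (X i * X j) f = pderiv i (pderiv j f) := by
  rw [show (X i : MvPolynomial (Fin 5) K) * X j
      = monomial (Finsupp.single i 1 + Finsupp.single j 1) 1 from by
      rw [X, X, monomial_mul, mul_one],
    applyOp_monomial]
  fin_cases i <;> fin_cases j <;>
    simp [List.ofFn_succ, Finsupp.single_apply, Module.End.mul_apply, show (Fin.succ 2 : Fin 5) = 3 from rfl, show ((Fin.succ 2).succ : Fin 5) = 4 from rfl, show (Fin.succ 1 : Fin 5) = 2 from rfl, show (Fin.succ 0 : Fin 5) = 1 from rfl, pow_two] <;>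
    try exact pderiv_comm' _ _ f

end Lemmas

section Lemmas2
variable {K : Type*} [CommSemiring K]

private lemma singles (m : Fin 5 →₀ ℕ) (h : m 0 + m 1 + m 2 + m 3 + m 4 = 1) :
    ∃ i : Fin 5, m = Finsupp.single i 1 := by
  have h5 : m 0 = 1 ∧ m 1 = 0 ∧ m 2 = 0 ∧ m 3 = 0 ∧ m 4 = 0 ∨
      m 1 = 1 ∧ m 0 = 0 ∧ m 2 = 0 ∧ m 3 = 0 ∧ m 4 = 0 ∨
      m 2 = 1 ∧ m 0 = 0 ∧ m 1 = 0 ∧ m 3 = 0 ∧ m 4 = 0 ∨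
      m 3 = 1 ∧ m 0 = 0 ∧ m 1 = 0 ∧ m 2 = 0 ∧ m 4 = 0 ∨
      m 4 = 1 ∧ m 0 = 0 ∧ m 1 = 0 ∧ m 2 = 0 ∧ m 3 = 0 := by omega
  rcases h5 with h'|h'|h'|h'|h'
  · exact ⟨0, by ext j; fin_cases j <;> simp [Finsupp.single_apply, h'.1, h'.2.1, h'.2.2.1,
      h'.2.2.2.1, h'.2.2.2.2]⟩
  · exact ⟨1, by ext j; fin_cases j <;> simp [Finsupp.single_apply, h'.1, h'.2.1, h'.2.2.1,
      h'.2.2.2.1, h'.2.2.2.2]⟩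
  · exact ⟨2, by ext j; fin_cases j <;> simp [Finsupp.single_apply, h'.1, h'.2.1, h'.2.2.1,
      h'.2.2.2.1, h'.2.2.2.2]⟩
  · exact ⟨3, by ext j; fin_cases j <;> simp [Finsupp.single_apply, h'.1, h'.2.1, h'.2.2.1,
      h'.2.2.2.1, h'.2.2.2.2]⟩
  · exact ⟨4, by ext j; fin_cases j <;> simp [Finsupp.single_apply, h'.1, h'.2.1, h'.2.2.1,
      h'.2.2.2.1, h'.2.2.2.2]⟩

private lemma hom1_support (L : MvPolynomial (Fin 5) K) (hL : L.IsHomogeneous 1)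
    {m : Fin 5 →₀ ℕ} (hm : coeff m L ≠ 0) : ∃ i : Fin 5, m = Finsupp.single i 1 := by
  have h1 := hL hm
  rw [Finsupp.weight_apply] at h1
  rw [Finsupp.sum_fintype] at h1
  · apply singles
    rw [Fin.sum_univ_five] at h1
    simpa using h1
  · intro i; simp

private lemma hom1_eq (L : MvPolynomial (Fin 5) K) (hL : L.IsHomogeneous 1) :
    L = ∑ i : Fin 5, C (coeff (Finsupp.single i 1) L) * X i := by
  apply MvPolynomial.ext
  intro m
  by_cases hm : ∃ i : Fin 5, m = Finsupp.single i 1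
  · obtain ⟨i, rfl⟩ := hm
    fin_cases i <;>
      simp [Fin.sum_univ_five, coeff_C_mul, coeff_X', Finsupp.single_eq_single_iff]
  · have h0 : coeff m L = 0 := by
      by_contra h
      exact hm (hom1_support L hL h)
    rw [h0, coeff_sum]
    rw [Finset.sum_eq_zero]
    intro i _
    rw [coeff_C_mul, coeff_X', if_neg (fun h => hm ⟨i, h.symm⟩), mul_zero]

end Lemmas2

private lemma prod_norm {K : Type*} [CommSemiring K] (a b : K) (i j : Fin 5) :
    (C a * X i) * (C b * X j) = C (a*b) * (X i * X j : MvPolynomial (Fin 5) K) := by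
  rw [C_mul]; ring


/-- For `f = x₀x₃² + x₁x₃x₄ + x₂x₄²`, `A = Q/Ann_f` fails the Strong
Lefschetz Property: for every linear form `L ∈ A₁`, multiplication `L : A₁ → A₂` is
not an isomorphism.  Since `dim A₁ = dim A₂ = 5`, this is equivalent to saying that
for every linear form `L` there is `α ∈ Q₁` whose class in `A₁` is nonzero
(`α(f) ≠ 0`) but whose image `Lα` lies in `Ann_f` (`(Lα)(f) = 0`), i.e. `μ_L` has a
nontrivial kernel. -/
theorem perazzo_cubic_fails_SLP (K : Type*) [Field K] [CharZero K]
    (f : MvPolynomial (Fin 5) K)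
    (hf : f = X 0 * X 3 ^ 2 + X 1 * X 3 * X 4 + X 2 * X 4 ^ 2) :
    ∀ L : MvPolynomial (Fin 5) K, L.IsHomogeneous 1 →
      ∃ α : MvPolynomial (Fin 5) K, α.IsHomogeneous 1 ∧
        applyOp α f ≠ 0 ∧ applyOp (L * α) f = 0 := by
  intro L hL
  have hLeq := hom1_eq L hL
  set a : Fin 5 → K := fun i => coeff (Finsupp.single i 1) L with ha
  by_cases h3 : a 3 = 0
  · refine ⟨X 0, isHomogeneous_X _ _, ?_, ?_⟩
    · rw [applyOp_X, hf]
      simp only [map_add, pderiv_mul, pderiv_X_self, pderiv_X_of_ne (by decide : (3:Fin 5) ≠ 0),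
        pderiv_X_of_ne (by decide : (1:Fin 5) ≠ 0), pderiv_X_of_ne (by decide : (4:Fin 5) ≠ 0),
        pderiv_X_of_ne (by decide : (2:Fin 5) ≠ 0), map_pow]
      simp only [one_mul, mul_zero, zero_mul, add_zero, zero_add, mul_one]
      simpa using pow_ne_zero 2 (MvPolynomial.X_ne_zero (σ := Fin 5) (R := K) 3)
    · rw [hLeq, Fin.sum_univ_five]
      simp only [add_mul, mul_assoc]
      simp only [applyOp_add, applyOp_Cmul, applyOp_XX, hf]
      simp [pderiv_X, Pi.single_apply, pderiv_mul]
      exact h3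
  · refine ⟨C (a 4^2) * X 0 + C (-(2*a 3*a 4)) * X 1 + C (a 3^2) * X 2,
      ((isHomogeneous_C_mul_X _ _).add (isHomogeneous_C_mul_X _ _)).add
        (isHomogeneous_C_mul_X _ _), ?_, ?_⟩
    · intro hz
      apply h3
      have := congrArg (eval (fun k : Fin 5 => if k = 4 then (1:K) else 0)) hz
      simp only [applyOp_add, applyOp_Cmul, applyOp_X, hf] at this
      simp [pderiv_X, Pi.single_apply, pderiv_mul, smul_eq_C_mul] at this
      exact this
    · rw [hLeq, Fin.sum_univ_five]
      simp only [add_mul, mul_add, prod_norm]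
      simp only [applyOp_add, applyOp_Cmul, applyOp_XX, hf]
      simp [pderiv_X, Pi.single_apply, pderiv_mul, smul_eq_C_mul]
      simp only [ha, map_ofNat]
      ring
end

section
/- Let K be an algebraically closed field of characteristic zero and f ∈ K[x₀,…,x₄] an irreducible cubic form whose singular locus Sing(V(f)) contains the 2-plane V(x₃,x₄), and such that V(f) is not a cone (equivalently, the partial derivatives of f are linearly independent). Then there is a linear change of coordinates transforming f into x₀x₃² + x₁x₃x₄ + x₂x₄². -/
set_option maxHeartbeats 1000000

open MvPolynomial Matrix


private lemma fs5_eq_iff (u v : Fin 5 →₀ ℕ) :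
    u = v ↔ (u 0 = v 0 ∧ u 1 = v 1 ∧ u 2 = v 2 ∧ u 3 = v 3 ∧ u 4 = v 4) := by
  constructor
  · rintro rfl; exact ⟨rfl, rfl, rfl, rfl, rfl⟩
  · rintro ⟨h0, h1, h2, h3, h4⟩
    ext j; fin_cases j <;> assumption

private lemma fs5_degree (u : Fin 5 →₀ ℕ) :
    u.degree = u 0 + u 1 + u 2 + u 3 + u 4 := by
  rw [Finsupp.degree_apply, Finset.sum_subset (Finset.subset_univ _)
    (by intro x _ hx; simpa [Finsupp.notMem_support_iff] using hx)]
  simp [Fin.sum_univ_five]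

private lemma span34_coeff {K : Type*} [CommRing K] {p : MvPolynomial (Fin 5) K}
    (hp : p ∈ Ideal.span ({X 3, X 4} : Set (MvPolynomial (Fin 5) K)))
    (m : Fin 5 →₀ ℕ) (h3 : m 3 = 0) (h4 : m 4 = 0) : coeff m p = 0 := by
  have himg : ({X 3, X 4} : Set (MvPolynomial (Fin 5) K)) = X '' {3, 4} := by
    rw [Set.image_insert_eq, Set.image_singleton]
  rw [himg, mem_ideal_span_X_image] at hp
  by_contra h
  obtain ⟨i, hi, hne⟩ := hp m (mem_support_iff.2 h)
  rcases hi with rfl | rfl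
  · exact hne h3
  · exact hne h4


private lemma coeff_pderiv {K : Type*} [CommRing K] (i : Fin 5) (f : MvPolynomial (Fin 5) K)
    (m : Fin 5 →₀ ℕ) :
    coeff m (pderiv i f) = (m i + 1 : ℕ) * coeff (m + Finsupp.single i 1) f := by
  induction f using MvPolynomial.induction_on' with
  | monomial s a =>
    rw [pderiv_monomial, coeff_monomial, coeff_monomial]
    by_cases h : s = m + Finsupp.single i 1
    · subst h
      rw [if_pos, if_pos rfl]
      · rw [Finsupp.add_apply, Finsupp.single_apply, if_pos rfl]
        push_cast; ring
      · ext j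
        have := Finsupp.tsub_apply (m + Finsupp.single i 1) (Finsupp.single i 1) j
        rw [this, Finsupp.add_apply]
        omega
    · rw [if_neg h, mul_zero]
      rcases eq_or_ne (s - Finsupp.single i 1) m with he | hne
      · rw [if_pos he]
        rcases eq_or_ne (s i) 0 with h0 | h0
        · rw [h0]; push_cast; ring
        · exfalso; apply h
          ext j
          have hj := DFunLike.congr_fun he j
          rw [Finsupp.tsub_apply] at hj
          rw [Finsupp.add_apply]
          rcases eq_or_ne i j with rfl | hij
          · rw [Finsupp.single_eq_same] at hj ⊢; omega
          · rw [Finsupp.single_eq_of_ne' hij] at hj ⊢; omega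
      · rw [if_neg hne]
  | add p q hp hq => simp [hp, hq, mul_add]

private lemma cubic_decomp {K : Type*} [CommRing K] (f : MvPolynomial (Fin 5) K)
    (hf3 : f.IsHomogeneous 3)
    (hv : ∀ m : Fin 5 →₀ ℕ, m 3 + m 4 ≤ 1 → coeff m f = 0) :
    ∃ a b c : Fin 5 → K,
      f = (∑ i, C (a i) * (X i * X 3 ^ 2)) + (∑ i, C (b i) * (X i * X 3 * X 4))
        + (∑ i, C (c i) * (X i * X 4 ^ 2)) := by
  classical
  set ua : Fin 5 → (Fin 5 →₀ ℕ) := fun i => Finsupp.single i 1 + Finsupp.single 3 2 with hua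
  set ub : Fin 5 → (Fin 5 →₀ ℕ) :=
    fun i => Finsupp.single i 1 + Finsupp.single 3 1 + Finsupp.single 4 1 with hub
  set uc : Fin 5 → (Fin 5 →₀ ℕ) := fun i => Finsupp.single i 1 + Finsupp.single 4 2 with huc
  refine ⟨fun i => coeff (ua i) f, fun i => if (i : ℕ) < 3 then coeff (ub i) f else 0,
    fun i => coeff (uc i) f, ?_⟩
  have mono1 : ∀ i : Fin 5, (X i * X 3 ^ 2 : MvPolynomial (Fin 5) K) = monomial (ua i) 1 := by
    intro i
    rw [hua, X_pow_eq_monomial, X, monomial_mul, mul_one]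
  have mono2 : ∀ i : Fin 5, (X i * X 3 * X 4 : MvPolynomial (Fin 5) K) = monomial (ub i) 1 := by
    intro i
    rw [hub, X, X, X, monomial_mul, monomial_mul, mul_one, mul_one]
  have mono3 : ∀ i : Fin 5, (X i * X 4 ^ 2 : MvPolynomial (Fin 5) K) = monomial (uc i) 1 := by
    intro i
    rw [huc, X_pow_eq_monomial, X, monomial_mul, mul_one]
  have hdeg : ∀ m : Fin 5 →₀ ℕ, coeff m f ≠ 0 → m 0 + m 1 + m 2 + m 3 + m 4 = 3 := by
    intro m hm
    have := hf3.coeff_eq_zero (d := m)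
    rw [fs5_degree] at this
    by_contra h
    exact hm (this h)
  apply MvPolynomial.ext
  intro m
  rw [coeff_add, coeff_add]
  simp only [mono1, mono2, mono3, C_mul_monomial, mul_one, coeff_sum, coeff_monomial]
  by_cases hm : m 0 + m 1 + m 2 + m 3 + m 4 = 3 ∧ 2 ≤ m 3 + m 4
  · obtain ⟨hs, h34⟩ := hm
    have h34' : (m 3 = 2 ∧ m 4 = 0) ∨ (m 3 = 1 ∧ m 4 = 1) ∨ (m 3 = 0 ∧ m 4 = 2) ∨
        (m 3 = 3 ∧ m 4 = 0) ∨ (m 3 = 2 ∧ m 4 = 1) ∨ (m 3 = 1 ∧ m 4 = 2) ∨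
        (m 3 = 0 ∧ m 4 = 3) := by omega
    rcases h34' with ⟨h3,h4⟩|⟨h3,h4⟩|⟨h3,h4⟩|⟨h3,h4⟩|⟨h3,h4⟩|⟨h3,h4⟩|⟨h3,h4⟩
    · have h012 : (m 0 = 1 ∧ m 1 = 0 ∧ m 2 = 0) ∨ (m 0 = 0 ∧ m 1 = 1 ∧ m 2 = 0) ∨
          (m 0 = 0 ∧ m 1 = 0 ∧ m 2 = 1) := by omega
      rcases h012 with h|h|h
      · obtain rfl : ua 0 = m := by
          rw [fs5_eq_iff]; simp [hua, hub, huc, Finsupp.single_apply]; omega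
        simp [Fin.sum_univ_five, hua, hub, huc, fs5_eq_iff, Finsupp.single_apply]
      · obtain rfl : ua 1 = m := by
          rw [fs5_eq_iff]; simp [hua, hub, huc, Finsupp.single_apply]; omega
        simp [Fin.sum_univ_five, hua, hub, huc, fs5_eq_iff, Finsupp.single_apply]
      · obtain rfl : ua 2 = m := by
          rw [fs5_eq_iff]; simp [hua, hub, huc, Finsupp.single_apply]; omega
        simp [Fin.sum_univ_five, hua, hub, huc, fs5_eq_iff, Finsupp.single_apply]
    · have h012 : (m 0 = 1 ∧ m 1 = 0 ∧ m 2 = 0) ∨ (m 0 = 0 ∧ m 1 = 1 ∧ m 2 = 0) ∨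
          (m 0 = 0 ∧ m 1 = 0 ∧ m 2 = 1) := by omega
      rcases h012 with h|h|h
      · obtain rfl : ub 0 = m := by
          rw [fs5_eq_iff]; simp [hua, hub, huc, Finsupp.single_apply]; omega
        simp [Fin.sum_univ_five, hua, hub, huc, fs5_eq_iff, Finsupp.single_apply]
      · obtain rfl : ub 1 = m := by
          rw [fs5_eq_iff]; simp [hua, hub, huc, Finsupp.single_apply]; omega
        simp [Fin.sum_univ_five, hua, hub, huc, fs5_eq_iff, Finsupp.single_apply]
      · obtain rfl : ub 2 = m := by
          rw [fs5_eq_iff]; simp [hua, hub, huc, Finsupp.single_apply]; omega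
        simp [Fin.sum_univ_five, hua, hub, huc, fs5_eq_iff, Finsupp.single_apply]
    · have h012 : (m 0 = 1 ∧ m 1 = 0 ∧ m 2 = 0) ∨ (m 0 = 0 ∧ m 1 = 1 ∧ m 2 = 0) ∨
          (m 0 = 0 ∧ m 1 = 0 ∧ m 2 = 1) := by omega
      rcases h012 with h|h|h
      · obtain rfl : uc 0 = m := by
          rw [fs5_eq_iff]; simp [hua, hub, huc, Finsupp.single_apply]; omega
        simp [Fin.sum_univ_five, hua, hub, huc, fs5_eq_iff, Finsupp.single_apply]
      · obtain rfl : uc 1 = m := by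
          rw [fs5_eq_iff]; simp [hua, hub, huc, Finsupp.single_apply]; omega
        simp [Fin.sum_univ_five, hua, hub, huc, fs5_eq_iff, Finsupp.single_apply]
      · obtain rfl : uc 2 = m := by
          rw [fs5_eq_iff]; simp [hua, hub, huc, Finsupp.single_apply]; omega
        simp [Fin.sum_univ_five, hua, hub, huc, fs5_eq_iff, Finsupp.single_apply]
    · have h012 : m 0 = 0 ∧ m 1 = 0 ∧ m 2 = 0 := by omega
      obtain ⟨h0, h1, h2⟩ := h012
      obtain rfl : ua 3 = m := by
        rw [fs5_eq_iff]; simp [hua, hub, huc, Finsupp.single_apply]; omega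
      simp [Fin.sum_univ_five, hua, hub, huc, fs5_eq_iff, Finsupp.single_apply]
      all_goals exact fun hlt => absurd hlt (by decide)
    · have h012 : m 0 = 0 ∧ m 1 = 0 ∧ m 2 = 0 := by omega
      obtain ⟨h0, h1, h2⟩ := h012
      obtain rfl : ua 4 = m := by
        rw [fs5_eq_iff]; simp [hua, hub, huc, Finsupp.single_apply]; omega
      simp [Fin.sum_univ_five, hua, hub, huc, fs5_eq_iff, Finsupp.single_apply]
      all_goals exact fun hlt => absurd hlt (by decide)
    · have h012 : m 0 = 0 ∧ m 1 = 0 ∧ m 2 = 0 := by omega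
      obtain ⟨h0, h1, h2⟩ := h012
      obtain rfl : uc 3 = m := by
        rw [fs5_eq_iff]; simp [hua, hub, huc, Finsupp.single_apply]; omega
      simp [Fin.sum_univ_five, hua, hub, huc, fs5_eq_iff, Finsupp.single_apply]
      all_goals exact fun hlt => absurd hlt (by decide)
    · have h012 : m 0 = 0 ∧ m 1 = 0 ∧ m 2 = 0 := by omega
      obtain ⟨h0, h1, h2⟩ := h012
      obtain rfl : uc 4 = m := by
        rw [fs5_eq_iff]; simp [hua, hub, huc, Finsupp.single_apply]; omega
      simp [Fin.sum_univ_five, hua, hub, huc, fs5_eq_iff, Finsupp.single_apply]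
      all_goals exact fun hlt => absurd hlt (by decide)
  · -- degenerate: coeff m f = 0 and all monomial sums vanish
    have hf0 : coeff m f = 0 := by
      by_contra h
      exact hm ⟨hdeg m h, by by_contra h2; exact h (hv m (by omega))⟩
    rw [hf0]
    rw [Finset.sum_eq_zero, Finset.sum_eq_zero, Finset.sum_eq_zero]
    · simp
    all_goals
      intro i _
      rw [if_neg]
      intro h
      rw [fs5_eq_iff] at h
      fin_cases i <;> simp [hua, hub, huc, Finsupp.single_apply] at h <;> omega

/-- Let `K` be algebraically closed of characteristic zero and
`f ∈ K[x₀,…,x₄]` an irreducible cubic form whose singular locus contains the plane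
`V(x₃,x₄)` (all first partials of `f` vanish on it, i.e. lie in the ideal
`(x₃,x₄)`), and which is not a cone (the partials are linearly independent).
Then a linear change of coordinates transforms `f` into `x₀x₃² + x₁x₃x₄ + x₂x₄²`. -/
theorem singular_plane_normal_form (K : Type*) [Field K] [IsAlgClosed K] [CharZero K]
    (f : MvPolynomial (Fin 5) K) (hf3 : f.IsHomogeneous 3) (hirr : Irreducible f)
    (hsing : f ∈ Ideal.span ({X 3, X 4} : Set (MvPolynomial (Fin 5) K)) ∧
      ∀ i : Fin 5, pderiv i f ∈ Ideal.span ({X 3, X 4} : Set (MvPolynomial (Fin 5) K)))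
    (hnotcone : LinearIndependent K (fun i : Fin 5 => pderiv i f)) :
    ∃ M : GL (Fin 5) K,
      (aeval fun i : Fin 5 =>
          ∑ j : Fin 5, (M : Matrix (Fin 5) (Fin 5) K) i j • (X j : MvPolynomial (Fin 5) K)) f =
        X 0 * X 3 ^ 2 + X 1 * X 3 * X 4 + X 2 * X 4 ^ 2 := by
  classical
  obtain ⟨hf_mem, hpd⟩ := hsing
  have hv : ∀ m : Fin 5 →₀ ℕ, m 3 + m 4 ≤ 1 → coeff m f = 0 := by
    intro m hm
    rcases Nat.eq_zero_or_pos (m 3) with h3 | h3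
    · rcases Nat.eq_zero_or_pos (m 4) with h4 | h4
      · exact span34_coeff hf_mem m h3 h4
      · have h41 : m 4 = 1 := by omega
        have hx : coeff (m.erase 4) (pderiv 4 f) = 0 :=
          span34_coeff (hpd 4) _ (by rw [Finsupp.erase_ne (by decide)]; exact h3)
            (Finsupp.erase_same)
        rw [_root_.coeff_pderiv] at hx
        have hme : m.erase 4 + Finsupp.single 4 1 = m := by
          conv_rhs => rw [← Finsupp.erase_add_single 4 m]
          rw [h41]
        rw [hme, Finsupp.erase_same] at hx
        simpa using hx
    · have h31 : m 3 = 1 := by omega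
      have h40 : m 4 = 0 := by omega
      have hx : coeff (m.erase 3) (pderiv 3 f) = 0 :=
        span34_coeff (hpd 3) _ (Finsupp.erase_same)
          (by rw [Finsupp.erase_ne (by decide)]; exact h40)
      rw [_root_.coeff_pderiv] at hx
      have hme : m.erase 3 + Finsupp.single 3 1 = m := by
        conv_rhs => rw [← Finsupp.erase_add_single 3 m]
        rw [h31]
      rw [hme, Finsupp.erase_same] at hx
      simpa using hx
  obtain ⟨a, b, c, hf⟩ := cubic_decomp f hf3 hv
  -- partial derivatives
  have hp0 : pderiv 0 f = C (a 0) * X 3 ^ 2 + C (b 0) * (X 3 * X 4) + C (c 0) * X 4 ^ 2 := by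
    rw [hf]
    simp (config := { decide := true }) only [Fin.sum_univ_five, map_add, Derivation.leibniz,
      pderiv_X, smul_eq_mul, Pi.single_apply, _root_.map_mul, pderiv_C, Derivation.leibniz_pow, map_pow,
      ite_true, ite_false, if_true, if_false, mul_zero, zero_mul, add_zero, zero_add, mul_one]
    ring
  have hp1 : pderiv 1 f = C (a 1) * X 3 ^ 2 + C (b 1) * (X 3 * X 4) + C (c 1) * X 4 ^ 2 := by
    rw [hf]
    simp (config := { decide := true }) only [Fin.sum_univ_five, map_add, Derivation.leibniz,
      pderiv_X, smul_eq_mul, Pi.single_apply, _root_.map_mul, pderiv_C, Derivation.leibniz_pow, map_pow,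
      ite_true, ite_false, if_true, if_false, mul_zero, zero_mul, add_zero, zero_add, mul_one]
    ring
  have hp2 : pderiv 2 f = C (a 2) * X 3 ^ 2 + C (b 2) * (X 3 * X 4) + C (c 2) * X 4 ^ 2 := by
    rw [hf]
    simp (config := { decide := true }) only [Fin.sum_univ_five, map_add, Derivation.leibniz,
      pderiv_X, smul_eq_mul, Pi.single_apply, _root_.map_mul, pderiv_C, Derivation.leibniz_pow, map_pow,
      ite_true, ite_false, if_true, if_false, mul_zero, zero_mul, add_zero, zero_add, mul_one]
    ring
  -- the matrix N
  set r3 : Fin 5 → K := fun j => if j = 3 then 1 else 0 with hr3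
  set r4 : Fin 5 → K := fun j => if j = 4 then 1 else 0 with hr4
  set N : Matrix (Fin 5) (Fin 5) K := Matrix.of ![a, b, c, r3, r4] with hN
  have hNentry0 : ∀ j, N 0 j = a j := fun j => rfl
  have hNentry1 : ∀ j, N 1 j = b j := fun j => rfl
  have hNentry2 : ∀ j, N 2 j = c j := fun j => rfl
  have hNentry3 : ∀ j, N 3 j = r3 j := fun j => rfl
  have hNentry4 : ∀ j, N 4 j = r4 j := fun j => rfl
  have hker : ∀ v : Fin 5 → K, N.mulVec v = 0 → v = 0 := by
    intro v hvv
    have h0 := congrFun hvv 0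
    have h1 := congrFun hvv 1
    have h2 := congrFun hvv 2
    have h3 := congrFun hvv 3
    have h4 := congrFun hvv 4
    simp only [Matrix.mulVec, dotProduct, Fin.sum_univ_five, hNentry0, hNentry1, hNentry2,
      hNentry3, hNentry4, hr3, hr4, Pi.zero_apply] at h0 h1 h2 h3 h4
    simp (config := { decide := true }) only [ite_true, ite_false, if_true, if_false,
      zero_add, add_zero, zero_mul, one_mul, mul_zero] at h3 h4
    have hall := Fintype.linearIndependent_iff.mp hnotcone v ?_
    · funext i
      exact hall i
    · rw [Fin.sum_univ_five, hp0, hp1, hp2, h3, h4]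
      rw [h3, h4] at h0 h1 h2
      have H0 := congrArg (C : K → MvPolynomial (Fin 5) K) h0
      have H1 := congrArg (C : K → MvPolynomial (Fin 5) K) h1
      have H2 := congrArg (C : K → MvPolynomial (Fin 5) K) h2
      simp only [map_add, _root_.map_mul, map_zero, mul_zero, add_zero] at H0 H1 H2
      simp only [smul_eq_C_mul, zero_smul, add_zero, C_0, zero_mul]
      linear_combination (X 3 : MvPolynomial (Fin 5) K) ^ 2 * H0 + (X 3 * X 4) * H1
        + (X 4 : MvPolynomial (Fin 5) K) ^ 2 * H2
  have hNunit : IsUnit N := by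
    rw [← Matrix.mulVec_injective_iff_isUnit]
    intro x y hxy
    have : N.mulVec (x - y) = 0 := by
      rw [Matrix.mulVec_sub, hxy, sub_self]
    have := hker _ this
    exact sub_eq_zero.mp this
  obtain ⟨u, hu⟩ := hNunit
  have hNW : N * ((u⁻¹ : (Matrix (Fin 5) (Fin 5) K)ˣ) : Matrix (Fin 5) (Fin 5) K) = 1 := by
    rw [← hu, ← Units.val_mul, mul_inv_cancel, Units.val_one]
  refine ⟨u⁻¹, ?_⟩
  set W : Matrix (Fin 5) (Fin 5) K := ((u⁻¹ : (Matrix (Fin 5) (Fin 5) K)ˣ) : Matrix (Fin 5) (Fin 5) K) with hW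
  set ρ : Fin 5 → MvPolynomial (Fin 5) K := fun i => ∑ j, N i j • X j with hρ
  set σf : Fin 5 → MvPolynomial (Fin 5) K := fun i => ∑ j, W i j • X j with hσ
  have hfρ : f = aeval ρ (X 0 * X 3 ^ 2 + X 1 * X 3 * X 4 + X 2 * X 4 ^ 2 :
      MvPolynomial (Fin 5) K) := by
    simp only [map_add, _root_.map_mul, map_pow, aeval_X]
    have e0 : ρ 0 = ∑ j, a j • X j := rfl
    have e1 : ρ 1 = ∑ j, b j • X j := rfl
    have e2 : ρ 2 = ∑ j, c j • X j := rfl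
    have e3 : ρ 3 = X 3 := by
      rw [hρ]
      simp [Fin.sum_univ_five, hNentry3, hr3]
    have e4 : ρ 4 = X 4 := by
      rw [hρ]
      simp [Fin.sum_univ_five, hNentry4, hr4]
    rw [e0, e1, e2, e3, e4, hf]
    simp only [Fin.sum_univ_five, smul_eq_C_mul]
    ring
  have hXi : ∀ i, aeval σf (ρ i) = X i := by
    intro i
    rw [hρ]
    simp only [map_sum, _root_.map_smul, aeval_X, hσ, Finset.smul_sum, smul_smul]
    rw [Finset.sum_comm]
    have hstep : ∀ k : Fin 5, (∑ j, (N i j * W j k) • (X k : MvPolynomial (Fin 5) K))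
        = ((N * W) i k) • X k := by
      intro k
      rw [← Finset.sum_smul, Matrix.mul_apply]
    simp only [hstep, hNW, Matrix.one_apply]
    simp
  calc aeval σf f
      = (aeval σf) (aeval ρ (X 0 * X 3 ^ 2 + X 1 * X 3 * X 4 + X 2 * X 4 ^ 2 :
          MvPolynomial (Fin 5) K)) := by
        rw [← hfρ]
    _ = aeval (fun i => aeval σf (ρ i)) (X 0 * X 3 ^ 2 + X 1 * X 3 * X 4 + X 2 * X 4 ^ 2 :
          MvPolynomial (Fin 5) K) := by
        rw [← AlgHom.comp_apply, comp_aeval]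
    _ = X 0 * X 3 ^ 2 + X 1 * X 3 * X 4 + X 2 * X 4 ^ 2 := by
        rw [show (fun i => aeval σf (ρ i)) = (X : Fin 5 → MvPolynomial (Fin 5) K) from
          funext hXi, aeval_X_left_apply]
end
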